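/- arXiv:1809.04690 — 2 statements merged into one kernel-verified Lean document; each statement's English description precedes it below -/
import Mathlib

section
/- Let q be a prime power, F_q the finite field with q elements, and 1 ≤ t ≤ ℓ ≤ m integers with ℓ ≥ 2 (and t ≥ 1). Then the number of ℓ×m matrices M over F_q with rank M exactly t and M_{11} ≠ 0 equals (q−1) · q^{ℓ+m−2} · μ_{t−1}(ℓ−1, m−1). -/
open Finset Matrix

section Aux
open LinearMap

variable {K : Type} [Field K]

theorem rank_reindex' {m n m' n' : Type*} [Fintype m] [Fintype n] [Fintype m'] [Fintype n']
    (e₁ : m ≃ m') (e₂ : n ≃ n') (A : Matrix m n K) :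
    (reindex e₁ e₂ A).rank = A.rank := by
  rw [Matrix.rank, Matrix.rank, mulVecLin_reindex, LinearMap.range_comp, LinearMap.range_comp,
    LinearEquiv.range, Submodule.map_top, LinearEquiv.finrank_map_eq]

/-- `p.prod q` is equivalent to `p × q`. -/
def Submodule.prodEquivProd {M M₂ : Type*} [AddCommGroup M] [AddCommGroup M₂]
    [Module K M] [Module K M₂] (p : Submodule K M) (q : Submodule K M₂) :
    (p.prod q) ≃ₗ[K] p × q where
  toFun x := (⟨x.1.1, x.2.1⟩, ⟨x.1.2, x.2.2⟩)
  invFun y := ⟨(y.1.1, y.2.1), ⟨y.1.2, y.2.2⟩⟩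
  map_add' _ _ := rfl
  map_smul' _ _ := rfl
  left_inv _ := rfl
  right_inv _ := rfl

theorem range_prodMap' {M M₂ M₃ M₄ : Type*} [AddCommGroup M] [AddCommGroup M₂] [AddCommGroup M₃]
    [AddCommGroup M₄] [Module K M] [Module K M₂] [Module K M₃] [Module K M₄]
    (f : M →ₗ[K] M₂) (g : M₃ →ₗ[K] M₄) :
    range (f.prodMap g) = (range f).prod (range g) := by
  ext ⟨x, y⟩
  simp only [LinearMap.mem_range, Submodule.mem_prod, prodMap_apply, Prod.ext_iff, Prod.exists]
  exact ⟨fun ⟨a, b, h1, h2⟩ => ⟨⟨a, h1⟩, ⟨b, h2⟩⟩, fun ⟨⟨a, h1⟩, ⟨b, h2⟩⟩ => ⟨a, b, h1, h2⟩⟩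

theorem rank_fromBlocks_diag {α β γ δ : Type*} [Fintype α] [Fintype β] [Fintype γ] [Fintype δ]
    [DecidableEq α] [DecidableEq β] [DecidableEq γ] [DecidableEq δ]
    (A : Matrix α γ K) (D : Matrix β δ K) :
    (fromBlocks A 0 0 D).rank = A.rank + D.rank := by
  classical
  have key : (fromBlocks A 0 0 D).mulVecLin =
      (LinearEquiv.sumArrowLequivProdArrow α β K K).symm.toLinearMap ∘ₗ
        (A.mulVecLin.prodMap D.mulVecLin) ∘ₗ
        (LinearEquiv.sumArrowLequivProdArrow γ δ K K).toLinearMap := by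
    apply LinearMap.ext
    intro v
    have hv : v = Sum.elim (v ∘ Sum.inl) (v ∘ Sum.inr) := by
      funext i; cases i <;> rfl
    conv_lhs => rw [mulVecLin_apply, hv, fromBlocks_mulVec]
    funext i
    cases i <;> simp [LinearEquiv.sumArrowLequivProdArrow, Equiv.sumArrowEquivProdArrow,
      mulVecLin_apply, Function.comp]
  rw [Matrix.rank, key, LinearMap.range_comp, LinearMap.range_comp_of_range_eq_top _
    (LinearEquiv.range _), LinearEquiv.finrank_map_eq, range_prodMap',
    (Submodule.prodEquivProd _ _).finrank_eq, Module.finrank_prod]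
  rfl

theorem factor_lemma {l' m' : ℕ} (a : K) (ha : a ≠ 0)
    (B : Matrix (Fin 1) (Fin m') K) (C : Matrix (Fin l') (Fin 1) K)
    (D : Matrix (Fin l') (Fin m') K) :
    fromBlocks (a • (1 : Matrix (Fin 1) (Fin 1) K)) B C (D + a⁻¹ • (C * B)) =
      (fromBlocks 1 0 (a⁻¹ • C) 1 : Matrix (Fin 1 ⊕ Fin l') (Fin 1 ⊕ Fin l') K) *
        (fromBlocks (a • 1) 0 0 D : Matrix (Fin 1 ⊕ Fin l') (Fin 1 ⊕ Fin m') K) *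
        (fromBlocks 1 (a⁻¹ • B) 0 1 : Matrix (Fin 1 ⊕ Fin m') (Fin 1 ⊕ Fin m') K) := by
  rw [Matrix.fromBlocks_multiply, Matrix.fromBlocks_multiply]
  congr 1 <;>
    simp [Matrix.smul_mul, Matrix.mul_smul, smul_smul, inv_mul_cancel₀ ha,
      mul_inv_cancel₀ ha, add_comm]

theorem rank_shear {l' m' : ℕ} (a : K) (ha : a ≠ 0)
    (B : Matrix (Fin 1) (Fin m') K) (C : Matrix (Fin l') (Fin 1) K)
    (D : Matrix (Fin l') (Fin m') K) :
    (fromBlocks (a • (1 : Matrix (Fin 1) (Fin 1) K)) B C (D + a⁻¹ • (C * B))).rank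
      = 1 + D.rank := by
  rw [factor_lemma a ha B C D]
  rw [Matrix.rank_mul_eq_left_of_isUnit_det _ _ (by
    rw [Matrix.det_fromBlocks_zero₂₁]; simp)]
  rw [Matrix.rank_mul_eq_right_of_isUnit_det _ _ (by
    rw [Matrix.det_fromBlocks_zero₁₂]; simp)]
  rw [rank_fromBlocks_diag]
  congr 1
  rw [Matrix.rank_of_isUnit _ ((Matrix.isUnit_iff_isUnit_det _).2 (by simp [ha]))]
  simp

theorem toBlocks₁₁_eq_smul {l' m' : ℕ} (N : Matrix (Fin 1 ⊕ Fin l') (Fin 1 ⊕ Fin m') K) :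
    N.toBlocks₁₁ = N (Sum.inl 0) (Sum.inl 0) • (1 : Matrix (Fin 1) (Fin 1) K) := by
  ext i j
  have : i = 0 := Subsingleton.elim _ _
  have hj : j = 0 := Subsingleton.elim _ _
  subst this hj
  simp [toBlocks₁₁]

/-- The key bijection. -/
noncomputable def blockEquiv (K : Type) [Field K] (l' m' t' : ℕ) :
    ({a : K // a ≠ 0} × Matrix (Fin 1) (Fin m') K × Matrix (Fin l') (Fin 1) K ×
      {D : Matrix (Fin l') (Fin m') K // D.rank = t'}) ≃
    {N : Matrix (Fin 1 ⊕ Fin l') (Fin 1 ⊕ Fin m') K //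
      N.rank = t' + 1 ∧ N (Sum.inl 0) (Sum.inl 0) ≠ 0} where
  toFun x := ⟨fromBlocks (x.1.1 • 1) x.2.1 x.2.2.1
      (x.2.2.2.1 + x.1.1⁻¹ • (x.2.2.1 * x.2.1)), by
    refine ⟨?_, ?_⟩
    · rw [rank_shear _ x.1.2, x.2.2.2.2, add_comm]
    · simpa [fromBlocks_apply₁₁] using x.1.2⟩
  invFun M := ⟨⟨M.1 (Sum.inl 0) (Sum.inl 0), M.2.2⟩, M.1.toBlocks₁₂, M.1.toBlocks₂₁,
    ⟨M.1.toBlocks₂₂ - (M.1 (Sum.inl 0) (Sum.inl 0))⁻¹ • (M.1.toBlocks₂₁ * M.1.toBlocks₁₂), by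
      obtain ⟨N, hrk, ha⟩ := M
      dsimp only
      have key : N = fromBlocks (N (Sum.inl 0) (Sum.inl 0) • 1) N.toBlocks₁₂ N.toBlocks₂₁
          ((N.toBlocks₂₂ - (N (Sum.inl 0) (Sum.inl 0))⁻¹ • (N.toBlocks₂₁ * N.toBlocks₁₂))
            + (N (Sum.inl 0) (Sum.inl 0))⁻¹ • (N.toBlocks₂₁ * N.toBlocks₁₂)) := by
        rw [sub_add_cancel, ← toBlocks₁₁_eq_smul, fromBlocks_toBlocks]
      rw [key, rank_shear _ ha] at hrk
      omega⟩⟩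
  left_inv x := by
    obtain ⟨⟨a, ha⟩, B, C, D, hD⟩ := x
    simp only [fromBlocks_apply₁₁, Matrix.smul_apply, one_apply_eq, smul_eq_mul, mul_one,
      toBlocks_fromBlocks₁₂, toBlocks_fromBlocks₂₁, toBlocks_fromBlocks₂₂, add_sub_cancel_right,
      Prod.mk.injEq, Subtype.mk.injEq]
  right_inv M := by
    obtain ⟨N, hrk, ha⟩ := M
    apply Subtype.ext
    simp only
    rw [sub_add_cancel, ← toBlocks₁₁_eq_smul, fromBlocks_toBlocks]

end Aux

/-- `mu K a b t` is the number of `a × b` matrices over the field `K` of rank exactly `t`. -/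
noncomputable def mu (K : Type) [Field K] [Fintype K] (a b t : ℕ) : ℕ :=
  Nat.card {M : Matrix (Fin a) (Fin b) K // M.rank = t}

theorem stmt_4 (q t l m : ℕ) (hq : IsPrimePow q)
    (K : Type) [Field K] [Fintype K] (hK : Fintype.card K = q)
    (ht : 1 ≤ t) (htl : t ≤ l) (hlm : l ≤ m) (hl2 : 2 ≤ l) :
    Nat.card {M : Matrix (Fin l) (Fin m) K //
        M.rank = t ∧ M ⟨0, by omega⟩ ⟨0, by omega⟩ ≠ 0} =
      (q - 1) * q ^ (l + m - 2) * mu K (l - 1) (m - 1) (t - 1) := by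
  obtain ⟨l', rfl⟩ : ∃ l', l = l' + 1 := ⟨l - 1, by omega⟩
  obtain ⟨m', rfl⟩ : ∃ m', m = m' + 1 := ⟨m - 1, by omega⟩
  obtain ⟨t', rfl⟩ : ∃ t', t = t' + 1 := ⟨t - 1, by omega⟩
  subst hK
  set eL : Fin 1 ⊕ Fin l' ≃ Fin (l' + 1) := finSumFinEquiv.trans (finCongr (by omega)) with heLdef
  set eM : Fin 1 ⊕ Fin m' ≃ Fin (m' + 1) := finSumFinEquiv.trans (finCongr (by omega)) with heMdef
  have heL : eL (Sum.inl 0) = (⟨0, by omega⟩ : Fin (l' + 1)) := by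
    apply Fin.ext; simp [heLdef, finSumFinEquiv]
  have heM : eM (Sum.inl 0) = (⟨0, by omega⟩ : Fin (m' + 1)) := by
    apply Fin.ext; simp [heMdef, finSumFinEquiv]
  have e2 : {N : Matrix (Fin 1 ⊕ Fin l') (Fin 1 ⊕ Fin m') K //
        N.rank = t' + 1 ∧ N (Sum.inl 0) (Sum.inl 0) ≠ 0} ≃
      {M : Matrix (Fin (l' + 1)) (Fin (m' + 1)) K //
        M.rank = t' + 1 ∧ M ⟨0, by omega⟩ ⟨0, by omega⟩ ≠ 0} := by
    refine (Matrix.reindex eL eM).subtypeEquiv (fun N => ?_)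
    rw [rank_reindex']
    have : (Matrix.reindex eL eM N) ⟨0, by omega⟩ ⟨0, by omega⟩ = N (Sum.inl 0) (Sum.inl 0) := by
      rw [← heL, ← heM]
      simp
    rw [this]
  rw [← Nat.card_congr ((blockEquiv K l' m' t').trans e2)]
  rw [Nat.card_prod, Nat.card_prod, Nat.card_prod]
  have h1 : Nat.card {a : K // a ≠ 0} = Fintype.card K - 1 := by
    rw [← Nat.card_congr unitsEquivNeZero, Nat.card_units, Nat.card_eq_fintype_card]
  have h2 : Nat.card (Matrix (Fin 1) (Fin m') K) = Fintype.card K ^ m' := by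
    rw [Nat.card_eq_fintype_card,
      show Fintype.card (Matrix (Fin 1) (Fin m') K) =
        Fintype.card (Fin 1 → Fin m' → K) from rfl]
    simp [Fintype.card_fun]
  have h3 : Nat.card (Matrix (Fin l') (Fin 1) K) = Fintype.card K ^ l' := by
    rw [Nat.card_eq_fintype_card,
      show Fintype.card (Matrix (Fin l') (Fin 1) K) =
        Fintype.card (Fin l' → Fin 1 → K) from rfl]
    simp [Fintype.card_fun]
  have h4 : Nat.card {D : Matrix (Fin l') (Fin m') K // D.rank = t'} =
      mu K (l' + 1 - 1) (m' + 1 - 1) (t' + 1 - 1) := by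
    simp [mu]
  rw [h1, h2, h3, h4]
  rw [show l' + 1 + (m' + 1) - 2 = m' + l' from by omega, pow_add]
  ring
end

section
/- Let q be a prime power, F_q the finite field with q elements, and integers 1 ≤ t ≤ ℓ ≤ m with m ≥ 2. Then the smallest integer n ≥ 1 for which there exist n nonzero matrices M_1, …, M_n ∈ Mat_{ℓ×m}, each of rank at most t, pairwise non-proportional (no M_i is an F_q-scalar multiple of M_j for i ≠ j), that are linearly dependent over F_q, equals 3. (Equivalently, the minimum distance of the dual code Ĉ_det(t;ℓ,m)^⊥ equals 3.) -/
open Finset Matrix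

lemma aux_rank_vecMulVec_le {K : Type} [Field K] {l m : ℕ}
    (u : Fin l → K) (v : Fin m → K) : (vecMulVec u v).rank ≤ 1 := by
  rw [Matrix.rank]
  have h : LinearMap.range (vecMulVec u v).mulVecLin ≤ K ∙ u := by
    rintro x ⟨y, rfl⟩
    simp only [mulVecLin_apply]
    have : (vecMulVec u v).mulVec y = (v ⬝ᵥ y) • u := by
      ext i
      simp [vecMulVec, mulVec, dotProduct, Finset.sum_mul, Finset.mul_sum]; ring_nf
    rw [this]
    exact Submodule.smul_mem _ _ (Submodule.mem_span_singleton_self u)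
  calc Module.finrank K (LinearMap.range (vecMulVec u v).mulVecLin)
      ≤ Module.finrank K (K ∙ u) := Submodule.finrank_mono h
    _ ≤ 1 := by simpa using finrank_span_le_card ({u} : Set (Fin l → K))

theorem stmt_14 (q t l m : ℕ) (hq : IsPrimePow q)
    (K : Type) [Field K] [Fintype K] (hK : Fintype.card K = q)
    (ht : 1 ≤ t) (htl : t ≤ l) (hlm : l ≤ m) (hm2 : 2 ≤ m) :
    IsLeast {n : ℕ | 1 ≤ n ∧ ∃ M : Fin n → Matrix (Fin l) (Fin m) K,
        (∀ i, M i ≠ 0) ∧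
        (∀ i, (M i).rank ≤ t) ∧
        (∀ i j, i ≠ j → ∀ c : K, M i ≠ c • M j) ∧
        ¬ LinearIndependent K M} 3 := by
  have hl1 : 1 ≤ l := le_trans ht htl
  set i0 : Fin l := ⟨0, by omega⟩
  set j0 : Fin m := ⟨0, by omega⟩
  set j1 : Fin m := ⟨1, by omega⟩
  have hj : j0 ≠ j1 := by simp [j0, j1, Fin.ext_iff]
  set u : Fin l → K := Pi.single i0 1 with hu
  set v0 : Fin m → K := Pi.single j0 1
  set v1 : Fin m → K := Pi.single j1 1
  -- entry evaluation helper
  have hent : ∀ (v : Fin m → K) (j : Fin m), vecMulVec u v i0 j = v j := by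
    intro v j; simp [vecMulVec, hu]
  constructor
  · refine ⟨by norm_num, ![vecMulVec u v0, vecMulVec u v1, vecMulVec u (v0 + v1)], ?_, ?_, ?_, ?_⟩
    · intro i h
      fin_cases i <;>
      · have h0 := congrFun (congrFun h i0) j0
        have h1 := congrFun (congrFun h i0) j1
        simp [vecMulVec, u, v0, v1, Pi.single_apply, i0, j0, j1] at h0 h1
    · intro i
      fin_cases i <;> exact le_trans (aux_rank_vecMulVec_le _ _) ht
    · intro i j hij c h
      fin_cases i <;> fin_cases j <;>
      · have h0 := congrFun (congrFun h i0) j0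
        have h1 := congrFun (congrFun h i0) j1
        clear h
        simp [vecMulVec, u, v0, v1, Pi.single_apply, i0, j0, j1] at h0 h1
        all_goals first
          | exact hij rfl
          | (subst h0; simp at h1)
          | (subst h1; simp at h0)
    · intro hli
      have := Fintype.linearIndependent_iff.mp hli ![1, 1, -1] (by
        ext i j
        simp only [Fin.sum_univ_three, Matrix.smul_apply, Matrix.add_apply,
          Matrix.zero_apply, vecMulVec, Matrix.of_apply, smul_eq_mul, Matrix.cons_val_zero,
          Matrix.cons_val_one, Matrix.head_cons, Matrix.cons_val_two, Matrix.tail_cons,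
          Pi.add_apply]
        ring)
      simpa using this 0
  · rintro n ⟨hn1, M, hne, -, hprop, hdep⟩
    by_contra hlt
    push_neg at hlt
    interval_cases n
    · exact hdep (linearIndependent_unique_iff.mpr (hne 0))
    · have hM : M = ![M 0, M 1] := by
        ext i j k; fin_cases i <;> rfl
      rw [hM, linearIndependent_fin2] at hdep
      push_neg at hdep
      obtain ⟨a, ha⟩ := hdep (hne 1)
      exact hprop 0 1 (by simp) a ha.symm
end
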